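/- Let r > 1 and 0 < η < r be real, let N ∈ ℕ, let h_0, …, h_N be (not necessarily distinct) points of [−1,1], let Q(w) = Π_{ν=0}^N (w − h_ν), and let f be holomorphic on the open disc { w ∈ ℂ : |w| < r + 2 }. Set M = sup { |f(w)| : |w| = r + 2 − η/2 }. Then for every real a with |a| ≤ r − η, | (1/(2πi)) ∮_{|w| = r+2−η/2} f(w) · Q(a) / ( Q(w) (w − a) ) dw | ≤ M · ( (r + 2 − η/2) / (2 + η/2) ) · ( (r + 1 − η) / (r + 1 − η/2) )^{N+1}. -/

import Mathlib

/-- Exponential upper bound for the Lagrange interpolation remainder term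
`(1/2πi) ∮_{|w|=r+2-η/2} f(w) Q(a) / (Q(w)(w-a)) dw` for `|a| ≤ r - η`, where
`Q(w) = ∏_{ν=0}^N (w - h_ν)` with nodes `h_ν ∈ [-1,1]` and `M` is the sup of `|f|`
on the circle `|w| = r + 2 - η/2`. -/
theorem statement_7 (r η : ℝ) (hr : 1 < r) (hη : 0 < η) (hηr : η < r)
    (N : ℕ) (h : ℕ → ℝ) (hmem : ∀ ν ≤ N, h ν ∈ Set.Icc (-1 : ℝ) 1)
    (f : ℂ → ℂ) (hf : DifferentiableOn ℂ f (Metric.ball (0 : ℂ) (r + 2)))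
    (M : ℝ)
    (hM : M = sSup ((fun w => ‖f w‖) '' Metric.sphere (0 : ℂ) (r + 2 - η / 2)))
    (a : ℝ) (ha : |a| ≤ r - η) :
    ‖(2 * Real.pi * Complex.I)⁻¹ *
        ∮ w in C(0, r + 2 - η / 2),
          f w * (∏ ν ∈ Finset.range (N + 1), ((a : ℂ) - (h ν : ℂ))) /
            ((∏ ν ∈ Finset.range (N + 1), (w - (h ν : ℂ))) * (w - (a : ℂ)))‖
      ≤ M * ((r + 2 - η / 2) / (2 + η / 2)) * ((r + 1 - η) / (r + 1 - η / 2)) ^ (N + 1) := by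
  set R : ℝ := r + 2 - η / 2 with hRdef
  have hR0 : 0 < R := by rw [hRdef]; linarith
  have hRlt : R < r + 2 := by rw [hRdef]; linarith
  have hsub : Metric.sphere (0 : ℂ) R ⊆ Metric.ball (0 : ℂ) (r + 2) := fun w hw => by
    simp only [Metric.mem_sphere, Metric.mem_ball] at *; linarith
  have hcont : ContinuousOn (fun w => ‖f w‖) (Metric.sphere (0 : ℂ) R) :=
    continuous_norm.comp_continuousOn ((hf.continuousOn).mono hsub)
  have hbdd : BddAbove ((fun w => ‖f w‖) '' Metric.sphere (0 : ℂ) R) :=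
    ((isCompact_sphere _ _).image_of_continuousOn hcont).bddAbove
  have hfM : ∀ w ∈ Metric.sphere (0 : ℂ) R, ‖f w‖ ≤ M := fun w hw => by
    rw [hM]; exact le_csSup hbdd ⟨w, hw, rfl⟩
  have hM0 : 0 ≤ M := by
    obtain ⟨w, hw⟩ : (Metric.sphere (0:ℂ) R).Nonempty := NormedSpace.sphere_nonempty.mpr hR0.le
    exact le_trans (norm_nonneg (f w)) (hfM w hw)
  -- key positive quantities
  have h1 : (0:ℝ) < r + 1 - η := by linarith
  have h2 : (0:ℝ) < r + 1 - η / 2 := by linarith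
  have h3 : (0:ℝ) < 2 + η / 2 := by linarith
  set C : ℝ := M * (r + 1 - η) ^ (N + 1) / ((r + 1 - η / 2) ^ (N + 1) * (2 + η / 2)) with hCdef
  have hbound : ∀ w ∈ Metric.sphere (0 : ℂ) R,
      ‖f w * (∏ ν ∈ Finset.range (N + 1), ((a : ℂ) - (h ν : ℂ))) /
        ((∏ ν ∈ Finset.range (N + 1), (w - (h ν : ℂ))) * (w - (a : ℂ)))‖ ≤ C := by
    intro w hw
    rw [mem_sphere_zero_iff_norm] at hw
    have hnum : ‖f w * ∏ ν ∈ Finset.range (N + 1), ((a : ℂ) - (h ν : ℂ))‖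
        ≤ M * (r + 1 - η) ^ (N + 1) := by
      rw [norm_mul, norm_prod]
      refine mul_le_mul (hfM w (by simpa [mem_sphere_zero_iff_norm] using hw)) ?_ ?_ hM0
      · calc ∏ ν ∈ Finset.range (N + 1), ‖(a : ℂ) - (h ν : ℂ)‖
              ≤ ∏ _ν ∈ Finset.range (N + 1), (r + 1 - η) := ?_
          _ = (r + 1 - η) ^ (N + 1) := by simp
        refine Finset.prod_le_prod (fun ν _ => norm_nonneg _) (fun ν hν => ?_)
        have hhν := hmem ν (Finset.mem_range_succ_iff.mp hν)
        have : |h ν| ≤ 1 := abs_le.mpr ⟨hhν.1, hhν.2⟩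
        calc ‖(a : ℂ) - (h ν : ℂ)‖ = |a - h ν| := by
              rw [← Complex.ofReal_sub, Complex.norm_real, Real.norm_eq_abs]
          _ ≤ |a| + |h ν| := abs_sub a (h ν)
          _ ≤ r + 1 - η := by linarith
      · exact Finset.prod_nonneg fun ν _ => norm_nonneg _
    have hden : (r + 1 - η / 2) ^ (N + 1) * (2 + η / 2)
        ≤ ‖(∏ ν ∈ Finset.range (N + 1), (w - (h ν : ℂ))) * (w - (a : ℂ))‖ := by
      rw [norm_mul, norm_prod]
      refine mul_le_mul ?_ ?_ h3.le (Finset.prod_nonneg fun ν _ => norm_nonneg _)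
      · calc (r + 1 - η / 2) ^ (N + 1)
              = ∏ _ν ∈ Finset.range (N + 1), (r + 1 - η / 2) := by simp
          _ ≤ ∏ ν ∈ Finset.range (N + 1), ‖w - (h ν : ℂ)‖ := ?_
        refine Finset.prod_le_prod (fun ν _ => by linarith) (fun ν hν => ?_)
        have hhν := hmem ν (Finset.mem_range_succ_iff.mp hν)
        have h1' : ‖(h ν : ℂ)‖ ≤ 1 := by
          rw [Complex.norm_real, Real.norm_eq_abs]; exact abs_le.mpr ⟨hhν.1, hhν.2⟩
        have hkey : ‖w‖ - ‖(h ν : ℂ)‖ ≤ ‖w - (h ν : ℂ)‖ := by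
          exact norm_sub_norm_le w ((h ν : ℂ))
        have habsw : ‖w‖ = R := hw
        rw [hRdef] at habsw
        linarith
      · have hkey : ‖w‖ - ‖(a : ℂ)‖ ≤ ‖w - (a : ℂ)‖ := by
          exact norm_sub_norm_le w ((a : ℂ))
        have habsw : ‖w‖ = R := hw
        rw [Complex.norm_real, Real.norm_eq_abs] at hkey
        rw [hRdef] at habsw
        have := abs_le.mp ha
        linarith [abs_nonneg a, neg_abs_le a, le_abs_self a]
    have hdenpos : (0:ℝ) < (r + 1 - η / 2) ^ (N + 1) * (2 + η / 2) := by positivity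
    rw [norm_div]
    exact div_le_div₀ (mul_nonneg hM0 (pow_nonneg h1.le _)) hnum hdenpos hden
  have hint := circleIntegral.norm_integral_le_of_norm_le_const hR0.le hbound
  rw [norm_mul, norm_inv]
  have habs2pi : ‖2 * Real.pi * Complex.I‖ = 2 * Real.pi := by
    simp [abs_of_pos Real.pi_pos]
  rw [habs2pi]
  calc (2 * Real.pi)⁻¹ * ‖∮ w in C(0, R),
          f w * (∏ ν ∈ Finset.range (N + 1), ((a : ℂ) - (h ν : ℂ))) /
            ((∏ ν ∈ Finset.range (N + 1), (w - (h ν : ℂ))) * (w - (a : ℂ)))‖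
      ≤ (2 * Real.pi)⁻¹ * (2 * Real.pi * R * C) := by
        refine mul_le_mul_of_nonneg_left ?_ (by positivity)
        simpa using hint
    _ = R * C := by field_simp [Real.pi_ne_zero]
    _ = M * (R / (2 + η / 2)) * ((r + 1 - η) / (r + 1 - η / 2)) ^ (N + 1) := by
        rw [hCdef, div_pow]; field_simp
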